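/- Let a > 0 be a real number and θ₁, θ₂, θ₃ real numbers. Set z_j = a·e^{iθ_j} for j = 1,2,3 and z₄ = a^{-3}·e^{-i(θ₁+θ₂+θ₃)}, so that z₁z₂z₃z₄ = 1. If the complex conjugate of z₁+z₂+z₃+z₄ equals z₁z₂z₃+z₁z₂z₄+z₁z₃z₄+z₂z₃z₄, then a = 1, i.e. |z₁| = |z₂| = |z₃| = |z₄| = 1. -/

import Mathlib

open Complex

theorem equal_moduli_forces_unit_circle (a : ℝ) (ha : 0 < a) (θ₁ θ₂ θ₃ : ℝ)
    (z₁ z₂ z₃ z₄ : ℂ)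
    (hz₁ : z₁ = (a : ℂ) * Complex.exp (θ₁ * Complex.I))
    (hz₂ : z₂ = (a : ℂ) * Complex.exp (θ₂ * Complex.I))
    (hz₃ : z₃ = (a : ℂ) * Complex.exp (θ₃ * Complex.I))
    (hz₄ : z₄ = ((a : ℂ) ^ 3)⁻¹ * Complex.exp (-(θ₁ + θ₂ + θ₃) * Complex.I))
    (h : starRingEnd ℂ (z₁ + z₂ + z₃ + z₄) =
      z₁ * z₂ * z₃ + z₁ * z₂ * z₄ + z₁ * z₃ * z₄ + z₂ * z₃ * z₄) :
    a = 1 := by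
  by_contra hne
  have ha0 : (a : ℂ) ≠ 0 := by exact_mod_cast ha.ne'
  set e₁ := Complex.exp (θ₁ * I) with he₁
  set e₂ := Complex.exp (θ₂ * I) with he₂
  set e₃ := Complex.exp (θ₃ * I) with he₃
  have h1 : e₁ ≠ 0 := Complex.exp_ne_zero _
  have h2 : e₂ ≠ 0 := Complex.exp_ne_zero _
  have h3 : e₃ ≠ 0 := Complex.exp_ne_zero _
  have hc1 : starRingEnd ℂ e₁ = e₁⁻¹ := by
    rw [he₁, ← Complex.exp_conj, map_mul, Complex.conj_ofReal, Complex.conj_I,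
      mul_neg, Complex.exp_neg]
  have hc2 : starRingEnd ℂ e₂ = e₂⁻¹ := by
    rw [he₂, ← Complex.exp_conj, map_mul, Complex.conj_ofReal, Complex.conj_I,
      mul_neg, Complex.exp_neg]
  have hc3 : starRingEnd ℂ e₃ = e₃⁻¹ := by
    rw [he₃, ← Complex.exp_conj, map_mul, Complex.conj_ofReal, Complex.conj_I,
      mul_neg, Complex.exp_neg]
  have hz4exp : Complex.exp (-(θ₁ + θ₂ + θ₃) * Complex.I) = (e₁ * e₂ * e₃)⁻¹ := by
    rw [he₁, he₂, he₃, ← Complex.exp_add, ← Complex.exp_add, ← Complex.exp_neg]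
    ring_nf
  rw [hz₁, hz₂, hz₃, hz₄] at h
  simp only [map_add, map_mul, Complex.conj_ofReal, map_pow, map_inv₀, hc1, hc2, hc3,
    hz4exp] at h
  field_simp at h
  ring_nf at h
  -- h : a³P³ + a⁷E = a⁵E + a⁹P³ where P = e₁e₂e₃, E = P·(e₂e₃+e₁e₃+e₁e₂)
  have ha2 : ((a:ℂ)^2 - 1) ≠ 0 := by
    intro hh
    have h1' : (a:ℂ)^2 = 1 := sub_eq_zero.mp hh
    have : a^2 = 1 := by exact_mod_cast h1'
    have : a = 1 := by nlinarith
    exact hne this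
  have hE : (a:ℂ)^3 * (e₁ * e₂ * e₃) ≠ 0 := by
    exact mul_ne_zero (pow_ne_zero _ ha0) (mul_ne_zero (mul_ne_zero h1 h2) h3)
  have hfac : ((a:ℂ)^2 - 1) * ((a:ℂ)^3 * (e₁ * e₂ * e₃)) *
      ((a:ℂ)^2 * (e₂*e₃ + e₁*e₃ + e₁*e₂) - ((a:ℂ)^4 + (a:ℂ)^2 + 1) * (e₁*e₂*e₃)^2) = 0 := by
    linear_combination (a:ℂ)^3 * (e₁*e₂*e₃) * h
  have hkey : (a:ℂ)^2 * (e₂*e₃ + e₁*e₃ + e₁*e₂)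
      = ((a:ℂ)^4 + (a:ℂ)^2 + 1) * (e₁*e₂*e₃)^2 := by
    rcases mul_eq_zero.mp hfac with hh | hh
    · exact absurd hh (mul_ne_zero ha2 hE)
    · exact sub_eq_zero.mp hh
  -- norms
  have habs : ‖(a:ℂ)^2 * (e₂*e₃ + e₁*e₃ + e₁*e₂)‖ ≤ a^2 * 3 := by
    rw [norm_mul]
    have : ‖(a:ℂ)^2‖ = a^2 := by
      rw [norm_pow, Complex.norm_real, Real.norm_eq_abs, abs_of_pos ha]
    rw [this]
    have hb : ‖e₂*e₃ + e₁*e₃ + e₁*e₂‖ ≤ 3 := by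
      have u1 : ‖e₁‖ = 1 := Complex.norm_exp_ofReal_mul_I θ₁
      have u2 : ‖e₂‖ = 1 := Complex.norm_exp_ofReal_mul_I θ₂
      have u3 : ‖e₃‖ = 1 := Complex.norm_exp_ofReal_mul_I θ₃
      calc ‖e₂*e₃ + e₁*e₃ + e₁*e₂‖
          ≤ ‖e₂*e₃ + e₁*e₃‖ + ‖e₁*e₂‖ := norm_add_le _ _
        _ ≤ ‖e₂*e₃‖ + ‖e₁*e₃‖ + ‖e₁*e₂‖ := by
            linarith [norm_add_le (e₂*e₃) (e₁*e₃)]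
        _ = 3 := by simp [norm_mul, u1, u2, u3]; norm_num
    nlinarith [norm_nonneg (e₂*e₃ + e₁*e₃ + e₁*e₂), sq_nonneg a]
  have habs2 : ‖((a:ℂ)^4 + (a:ℂ)^2 + 1) * (e₁*e₂*e₃)^2‖ = a^4 + a^2 + 1 := by
    rw [norm_mul, norm_pow, norm_mul, norm_mul]
    have u1 : ‖e₁‖ = 1 := Complex.norm_exp_ofReal_mul_I θ₁
    have u2 : ‖e₂‖ = 1 := Complex.norm_exp_ofReal_mul_I θ₂
    have u3 : ‖e₃‖ = 1 := Complex.norm_exp_ofReal_mul_I θ₃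
    rw [u1, u2, u3]
    have : ((a:ℂ)^4 + (a:ℂ)^2 + 1) = ((a^4 + a^2 + 1 : ℝ) : ℂ) := by push_cast; ring
    rw [this, Complex.norm_real, Real.norm_eq_abs, abs_of_pos (by positivity)]
    ring
  rw [hkey, habs2] at habs
  have hr : a^2 - 1 ≠ 0 := by intro hh; exact hne (by nlinarith)
  nlinarith [sq_pos_of_ne_zero hr]
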